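/- For integers 1 ≤ t < k < n-1, the quantity 2^{t-1}(∑_{i=0}^{k-t} C(n-t,i) + 1) is strictly greater than 2^{t}(∑_{i=0}^{k-t-1} C(n-t-1,i) + 1). In particular the expression 2^{t-1}(∑_{i=0}^{k-t} C(n-t,i) + 1) is strictly decreasing in t for 1 ≤ t ≤ k when k < n-1. -/

import Mathlib

theorem stmt_2 (n k t : ℕ) (ht : 1 ≤ t) (htk : t < k) (hkn : k < n - 1) :
    2 ^ t * ((∑ i ∈ Finset.range (k - t), (n - t - 1).choose i) + 1) <
      2 ^ (t - 1) * ((∑ i ∈ Finset.range (k - t + 1), (n - t).choose i) + 1) := by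
  set m := n - t - 1 with hm
  set a := k - t with ha
  have hnt : n - t = m + 1 := by omega
  have ha1 : 1 ≤ a := by omega
  have ham : a < m := by omega
  -- choose bound
  have hC : 2 ≤ m.choose a :=
    calc 2 ≤ a + 1 := by omega
      _ = (a + 1).choose a := (Nat.choose_succ_self_right a).symm
      _ ≤ m.choose a := Nat.choose_le_choose a (by omega)
  -- sum identity
  have hsum : ∑ i ∈ Finset.range (a + 1), (m + 1).choose i
      = 2 * (∑ i ∈ Finset.range a, m.choose i) + m.choose a := by
    rw [Finset.sum_range_succ']
    simp only [Nat.choose_succ_succ, Finset.sum_add_distrib, Nat.choose_zero_right]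
    have h2 : ∑ i ∈ Finset.range a, m.choose (i + 1) + m.choose 0
        = ∑ i ∈ Finset.range (a + 1), m.choose i := (Finset.sum_range_succ' _ _).symm
    rw [Finset.sum_range_succ] at h2
    simp only [Nat.succ_eq_add_one, Nat.choose_zero_right] at h2 ⊢
    omega
  rw [hnt, hsum]
  have hp : 2 ^ t = 2 * 2 ^ (t - 1) := by
    rw [← pow_succ']
    congr 1
    omega
  rw [hp]
  have hpos : 0 < 2 ^ (t - 1) := Nat.pow_pos (by norm_num)
  nlinarith [hpos, hC]
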